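/- In the NP-hardness gadget: let P_i = {c, c+(1,0), c−(1,0), c+(0,1), c−(0,1)} ⊆ ℝ² be a center c with its four unit-distance connectors, embedded in a point set P where every point of P \ P_i is at distance at least 2.4 from c and at least 1.4 from each connector. If r is a range assignment on P whose induced graph is strongly connected, then Σ_{p ∈ P_i} SI(p) ≥ 9. -/
import Mathlib


open scoped Classical

noncomputable section

abbrev Plane := EuclideanSpace ℝ (Fin 2)

/-- The four unit-distance connectors of a gadget with center `c`. -/
def connectors (c : Plane) : Finset Plane :=
  {c + EuclideanSpace.single 0 1, c - EuclideanSpace.single 0 1,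
   c + EuclideanSpace.single 1 1, c - EuclideanSpace.single 1 1}

/-- The gadget `P_i`: the center together with its four connectors. -/
def gadget (c : Plane) : Finset Plane := insert c (connectors c)

/-- Sender-centric interference of `p` under assignment `r` within the point set `P`. -/
def SI (P : Finset Plane) (r : Plane → ℝ) (p : Plane) : ℕ :=
  (P.filter (fun q => q ≠ p ∧ dist p q ≤ r p)).card

lemma coord_le_dist (p q : Plane) (i : Fin 2) : dist (p i) (q i) ≤ dist p q := by
  rw [EuclideanSpace.dist_eq]
  have h : dist (p i) (q i) ^ 2 ≤ ∑ j : Fin 2, dist (p j) (q j) ^ 2 :=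
    Finset.single_le_sum (f := fun j => dist (p j) (q j) ^ 2)
      (fun j _ => sq_nonneg _) (Finset.mem_univ i)
  have h2 := Real.sqrt_le_sqrt h
  rwa [Real.sqrt_sq dist_nonneg] at h2

lemma ne_of_one_le_dist {p q : Plane} (h : 1 ≤ dist p q) : p ≠ q := by
  intro he
  rw [he, dist_self] at h
  linarith

lemma exists_first_step {α : Type*} {R : α → α → Prop} {q : α} :
    ∀ {p : α}, Relation.ReflTransGen R p q → p ≠ q → ∃ b, b ≠ p ∧ R p b := by
  intro p h
  induction h using Relation.ReflTransGen.head_induction_on with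
  | refl => exact fun hne => absurd rfl hne
  | @head x y hxy hyq ih =>
    intro hne
    by_cases hy : y = x
    · subst hy; exact ih hne
    · exact ⟨y, hy, hxy⟩

lemma exists_crossing {α : Type*} {R : α → α → Prop} {S : α → Prop} {q : α} :
    ∀ {p : α}, Relation.ReflTransGen R p q → S p → ¬ S q →
      ∃ a, S a ∧ ∃ b, ¬ S b ∧ R a b := by
  intro p h
  induction h using Relation.ReflTransGen.head_induction_on with
  | refl => exact fun hp hq => absurd hp hq
  | @head x y hxy hyq ih =>
    intro hx hq
    by_cases hy : S y
    · exact ih hy hq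
    · exact ⟨x, hx, y, hy, hxy⟩

/-- in the NP-hardness gadget, every valid (strongly connected) range
assignment incurs total sender interference at least `9` on the gadget `P_i`. -/
theorem gadget_interference_ge_nine (P : Finset Plane) (c : Plane)
    (hsub : gadget c ⊆ P)
    (hfar : ∀ q ∈ P, q ∉ gadget c →
      (2.4 ≤ dist q c ∧ ∀ x ∈ connectors c, 1.4 ≤ dist q x))
    (hdeg : ∃ q₁ ∈ P, ∃ q₂ ∈ P, q₁ ∉ gadget c ∧ q₂ ∉ gadget c ∧ q₁ ≠ q₂ ∧
      dist q₁ c = 2.4 ∧ dist q₂ c = 2.4)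
    (r : Plane → ℝ) (hr : ∀ p, 0 ≤ r p)
    (hconn : ∀ p ∈ P, ∀ q ∈ P,
      Relation.ReflTransGen (fun a b => a ∈ P ∧ b ∈ P ∧ dist a b ≤ r a) p q) :
    9 ≤ ∑ p ∈ gadget c, SI P r p := by
  have hc_mem : c ∈ gadget c := Finset.mem_insert_self _ _
  -- distances from connectors to the center are exactly 1
  have hdc : ∀ x ∈ connectors c, dist x c = 1 := by
    intro x hx
    simp only [connectors, Finset.mem_insert, Finset.mem_singleton] at hx
    rcases hx with rfl | rfl | rfl | rfl
    · rw [dist_self_add_left]; simp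
    · rw [dist_self_sub_left]; simp
    · rw [dist_self_add_left]; simp
    · rw [dist_self_sub_left]; simp
  -- any two distinct points, one in the gadget, are at distance at least 1
  have hd : ∀ p ∈ gadget c, ∀ b ∈ P, b ≠ p → 1 ≤ dist p b := by
    intro p hp b hbP hbp
    by_cases hbg : b ∈ gadget c
    · have hp' := hp; have hb' := hbg
      simp only [gadget, connectors, Finset.mem_insert, Finset.mem_singleton] at hp' hb'
      rcases hp' with rfl | rfl | rfl | rfl | rfl <;> rcases hb' with rfl | rfl | rfl | rfl | rfl <;>
        first
          | exact absurd rfl hbp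
          | (refine le_trans ?_ (coord_le_dist _ _ 0);
             simp [Real.dist_eq, EuclideanSpace.single_apply] <;> (ring_nf; norm_num); done)
          | (refine le_trans ?_ (coord_le_dist _ _ 1);
             simp [Real.dist_eq, EuclideanSpace.single_apply] <;> (ring_nf; norm_num); done)
    · obtain ⟨h1, h2⟩ := hfar b hbP hbg
      rw [dist_comm]
      have hp' : p = c ∨ p ∈ connectors c := by
        simpa [gadget, Finset.mem_insert] using hp
      rcases hp' with rfl | hpc
      · linarith
      · linarith [h2 p hpc]
  -- connectors are distinct from the center
  have hcg : ∀ x ∈ connectors c, x ≠ c := fun x hx => ne_of_one_le_dist (hdc x hx).ge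
  have hcnot : c ∉ connectors c := fun h => (hcg c h) rfl
  -- pairwise distinctness of the connectors
  have n12 : (c + EuclideanSpace.single 0 1 : Plane) ≠ c - EuclideanSpace.single 0 1 :=
    ne_of_one_le_dist (by
      refine le_trans ?_ (coord_le_dist _ _ 0)
      simp [Real.dist_eq, EuclideanSpace.single_apply] <;> (ring_nf; norm_num); done)
  have n13 : (c + EuclideanSpace.single 0 1 : Plane) ≠ c + EuclideanSpace.single 1 1 :=
    ne_of_one_le_dist (by
      refine le_trans ?_ (coord_le_dist _ _ 0)
      simp [Real.dist_eq, EuclideanSpace.single_apply] <;> (ring_nf; norm_num); done)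
  have n14 : (c + EuclideanSpace.single 0 1 : Plane) ≠ c - EuclideanSpace.single 1 1 :=
    ne_of_one_le_dist (by
      refine le_trans ?_ (coord_le_dist _ _ 0)
      simp [Real.dist_eq, EuclideanSpace.single_apply] <;> (ring_nf; norm_num); done)
  have n23 : (c - EuclideanSpace.single 0 1 : Plane) ≠ c + EuclideanSpace.single 1 1 :=
    ne_of_one_le_dist (by
      refine le_trans ?_ (coord_le_dist _ _ 0)
      simp [Real.dist_eq, EuclideanSpace.single_apply] <;> (ring_nf; norm_num); done)
  have n24 : (c - EuclideanSpace.single 0 1 : Plane) ≠ c - EuclideanSpace.single 1 1 :=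
    ne_of_one_le_dist (by
      refine le_trans ?_ (coord_le_dist _ _ 0)
      simp [Real.dist_eq, EuclideanSpace.single_apply] <;> (ring_nf; norm_num); done)
  have n34 : (c + EuclideanSpace.single 1 1 : Plane) ≠ c - EuclideanSpace.single 1 1 :=
    ne_of_one_le_dist (by
      refine le_trans ?_ (coord_le_dist _ _ 1)
      simp [Real.dist_eq, EuclideanSpace.single_apply] <;> (ring_nf; norm_num); done)
  have hcard : (connectors c).card = 4 := by
    rw [connectors]
    rw [Finset.card_insert_of_notMem (by simp [n12, n13, n14]),
        Finset.card_insert_of_notMem (by simp [n23, n24]),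
        Finset.card_insert_of_notMem (by simp [n34]),
        Finset.card_singleton]
  -- a distinguished outside point
  obtain ⟨q₁, hq₁P, q₂, hq₂P, hq₁g, hq₂g, -, -, -⟩ := hdeg
  -- every gadget point has an out-neighbor, hence range at least 1
  have hr1 : ∀ p ∈ gadget c, 1 ≤ r p := by
    intro p hp
    have hpP := hsub hp
    have hne : p ≠ q₁ := fun h => hq₁g (h ▸ hp)
    obtain ⟨b, hb, hR⟩ := exists_first_step (hconn p hpP q₁ hq₁P) hne
    exact le_trans (hd p hp b hR.2.1 hb) hR.2.2
  -- each connector sees the center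
  have hSIx : ∀ x ∈ connectors c, 1 ≤ SI P r x := by
    intro x hx
    have hm : c ∈ P.filter (fun q => q ≠ x ∧ dist x q ≤ r x) := by
      refine Finset.mem_filter.mpr ⟨hsub hc_mem, (hcg x hx).symm, ?_⟩
      rw [hdc x hx]
      exact hr1 x (Finset.mem_insert_of_mem hx)
    exact Finset.card_pos.mpr ⟨c, hm⟩
  -- the center sees all four connectors
  have hsubc : connectors c ⊆ P.filter (fun q => q ≠ c ∧ dist c q ≤ r c) := by
    intro x hx
    refine Finset.mem_filter.mpr ⟨hsub (Finset.mem_insert_of_mem hx), hcg x hx, ?_⟩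
    rw [dist_comm, hdc x hx]
    exact hr1 c hc_mem
  have hSIc : 4 ≤ SI P r c := by
    calc 4 = (connectors c).card := hcard.symm
    _ ≤ _ := Finset.card_le_card hsubc
  -- some gadget point reaches outside the gadget
  obtain ⟨a, haG, b, hbg, hRab⟩ :=
    exists_crossing (S := fun z => z ∈ gadget c)
      (hconn c (hsub hc_mem) q₁ hq₁P) hc_mem hq₁g
  obtain ⟨-, hbP, hdab⟩ := hRab
  have hba : b ≠ a := fun h => hbg (h ▸ haG)
  have hbconn : b ∉ connectors c := fun h => hbg (Finset.mem_insert_of_mem h)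
  have hbc : b ≠ c := fun h => hbg (h ▸ hc_mem)
  -- split the sum
  have hsum : ∑ p ∈ gadget c, SI P r p = SI P r c + ∑ x ∈ connectors c, SI P r x := by
    rw [gadget]
    exact Finset.sum_insert hcnot
  have haG' : a = c ∨ a ∈ connectors c := by
    simpa [gadget, Finset.mem_insert] using haG
  rcases haG' with rfl | ha'
  · -- the center reaches outside: SI c ≥ 5
    have hb_mem : b ∈ P.filter (fun q => q ≠ a ∧ dist a q ≤ r a) :=
      Finset.mem_filter.mpr ⟨hbP, hba, hdab⟩
    have h5 : 5 ≤ SI P r a := by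
      calc 5 = (insert b (connectors a)).card := by
            rw [Finset.card_insert_of_notMem hbconn, hcard]
      _ ≤ _ := Finset.card_le_card (Finset.insert_subset hb_mem hsubc)
    have h4 : 4 ≤ ∑ x ∈ connectors a, SI P r x := by
      have h := Finset.card_nsmul_le_sum (connectors a) (SI P r) 1 hSIx
      simpa [hcard] using h
    omega
  · -- a connector reaches outside: SI a ≥ 2
    have hcb : c ≠ b := fun h => hbg (h ▸ hc_mem)
    have hc_mem' : c ∈ P.filter (fun q => q ≠ a ∧ dist a q ≤ r a) := by
      refine Finset.mem_filter.mpr ⟨hsub hc_mem, (hcg a ha').symm, ?_⟩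
      calc dist a c = 1 := hdc a ha'
      _ ≤ dist a b := hd a haG b hbP hba
      _ ≤ r a := hdab
    have hb_mem : b ∈ P.filter (fun q => q ≠ a ∧ dist a q ≤ r a) :=
      Finset.mem_filter.mpr ⟨hbP, hba, hdab⟩
    have h2a : 2 ≤ SI P r a := by
      calc 2 = ({c, b} : Finset Plane).card := by
            rw [Finset.card_insert_of_notMem (by simp [hcb]), Finset.card_singleton]
      _ ≤ _ := Finset.card_le_card
            (Finset.insert_subset hc_mem' (Finset.singleton_subset_iff.mpr hb_mem))
    have hsplit : SI P r a + ∑ x ∈ (connectors c).erase a, SI P r x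
        = ∑ x ∈ connectors c, SI P r x := Finset.add_sum_erase _ _ ha'
    have h3 : 3 ≤ ∑ x ∈ (connectors c).erase a, SI P r x := by
      have h := Finset.card_nsmul_le_sum ((connectors c).erase a) (SI P r) 1
        (fun x hx => hSIx x (Finset.mem_of_mem_erase hx))
      simpa [Finset.card_erase_of_mem ha', hcard] using h
    omega

end
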